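/- Let c ≠ 0, H₀ > 0, F∞ ∈ ℝ, E∞ ∈ ℝ, and let h : ℝ → ℝ be a differentiable positive function. Define E(x) = (h(x)³/H₀³)·E∞ + 2·(F∞/c)·((h(x)² − H₀²)·h(x)³/H₀⁵). Then E satisfies, at every x, the equation −c·H₀·(E/h³)'(x) + 4·(F∞/H₀⁴)·h(x)·h'(x) = 0, and E = E∞ wherever h = H₀. (This identifies the traveling-wave form of the vorticity tensor E along a solitary wave in terms of the water height.) -/

import Mathlib

/-- The traveling-wave form of the vorticity tensor `E` along a
solitary wave satisfies the traveling-wave evolution equation for `E`, and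
equals `E∞` wherever `h = H₀`. -/
theorem traveling_wave_E_equation
    (c H₀ Finf Einf : ℝ) (hc : c ≠ 0) (hH : 0 < H₀)
    (h : ℝ → ℝ) (hdiff : Differentiable ℝ h) (hpos : ∀ x, 0 < h x)
    (Efun : ℝ → ℝ)
    (hEdef : ∀ x, Efun x = ((h x) ^ 3 / H₀ ^ 3) * Einf
      + 2 * (Finf / c) * (((h x) ^ 2 - H₀ ^ 2) * (h x) ^ 3 / H₀ ^ 5)) :
    (∀ x, -(c * H₀) * deriv (fun y => Efun y / (h y) ^ 3) x
      + 4 * (Finf / H₀ ^ 4) * h x * deriv h x = 0) ∧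
    (∀ x, h x = H₀ → Efun x = Einf) := by
  have hH0 : H₀ ≠ 0 := ne_of_gt hH
  constructor
  · intro x
    have hfeq : (fun y => Efun y / (h y) ^ 3)
        = fun y => Einf / H₀ ^ 3 + 2 * (Finf / c) / H₀ ^ 5 * ((h y) ^ 2 - H₀ ^ 2) := by
      funext y
      have hy : h y ≠ 0 := ne_of_gt (hpos y)
      rw [hEdef y]
      field_simp
    rw [hfeq]
    have hd : deriv (fun y => Einf / H₀ ^ 3 + 2 * (Finf / c) / H₀ ^ 5 * ((h y) ^ 2 - H₀ ^ 2)) x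
        = 2 * (Finf / c) / H₀ ^ 5 * (2 * h x * deriv h x) := by
      have h1 : HasDerivAt (fun y => (h y) ^ 2 - H₀ ^ 2) (2 * h x * deriv h x) x := by
        have := ((hdiff x).hasDerivAt.pow 2).sub_const (H₀ ^ 2)
        simpa using this
      have h2 : HasDerivAt (fun y => Einf / H₀ ^ 3 + 2 * (Finf / c) / H₀ ^ 5 * ((h y) ^ 2 - H₀ ^ 2))
          (2 * (Finf / c) / H₀ ^ 5 * (2 * h x * deriv h x)) x :=
        (h1.const_mul (2 * (Finf / c) / H₀ ^ 5)).const_add (Einf / H₀ ^ 3)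
      exact h2.deriv
    rw [hd]
    field_simp
    ring
  · intro x hx
    rw [hEdef x, hx]
    field_simp
    ring
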